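/- Let A and B be n×n matrices with entries in {0,1}, supported on a single superdiagonal: a_i^j = b_i^j = 0 whenever j - i ≠ r, for some fixed r ∈ {1,…,n-1}. Suppose there exists an invertible matrix C with ‖C‖, ‖C^{-1}‖ ≤ ξ and ‖AC - CB‖ = ε < 1/(n! ξ^n). Then rank A = rank B. -/

import Mathlib

open Matrix

/-- The (Euclidean) operator norm of a complex matrix. -/
noncomputable def opNorm {ι κ : Type*} [Fintype ι] [Fintype κ] [DecidableEq κ]
    (M : Matrix ι κ ℂ) : ℝ :=
  ‖LinearMap.toContinuousLinearMap (Matrix.toEuclideanLin M)‖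

open scoped Matrix.Norms.L2Operator

namespace Superdiag

lemma opNorm_eq {n : ℕ} (M : Matrix (Fin n) (Fin n) ℂ) : opNorm M = ‖M‖ := rfl

lemma coord_le {m : ℕ} (x : EuclideanSpace ℂ (Fin m)) (i : Fin m) : ‖x i‖ ≤ ‖x‖ := by
  rw [EuclideanSpace.norm_eq]
  rw [show ‖x i‖ = Real.sqrt (‖x i‖ ^ 2) from (Real.sqrt_sq (norm_nonneg _)).symm]
  exact Real.sqrt_le_sqrt <|
    Finset.single_le_sum (f := fun k => ‖x k‖ ^ 2) (fun k _ => sq_nonneg _) (Finset.mem_univ i)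

lemma entry_le {n : ℕ} (M : Matrix (Fin n) (Fin n) ℂ) (i j : Fin n) :
    ‖M i j‖ ≤ opNorm M := by
  rw [opNorm_eq]
  have h1 := M.l2_opNorm_mulVec (EuclideanSpace.single j 1)
  rw [EuclideanSpace.norm_single, norm_one, mul_one] at h1
  refine le_trans ?_ h1
  have hx : ((EuclideanSpace.equiv (Fin n) ℂ).symm (M *ᵥ (EuclideanSpace.single j 1))) i
      = M i j := by
    have h0 : ((EuclideanSpace.equiv (Fin n) ℂ).symm (M *ᵥ (EuclideanSpace.single j 1))) i
        = (M *ᵥ (EuclideanSpace.single j 1) : Fin n → ℂ) i := rfl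
    rw [h0]
    simp [Matrix.mulVec, dotProduct, EuclideanSpace.single_apply]
  exact hx ▸ coord_le _ i

lemma opNorm_mul_le {n : ℕ} (M N : Matrix (Fin n) (Fin n) ℂ) :
    opNorm (M * N) ≤ opNorm M * opNorm N := by
  simp only [opNorm_eq]; exact Matrix.l2_opNorm_mul M N

/-- Small determinant bound: if all entries are bounded by `ξ` and a large combinatorial
rectangle of entries is bounded by `ε`, then the determinant is at most `n! ε ξ^(n-1)`. -/
lemma det_le {n : ℕ} (M : Matrix (Fin n) (Fin n) ℂ) {ξ ε : ℝ} (hξ : 0 ≤ ξ) (hε : 0 ≤ ε)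
    (hb : ∀ i j, ‖M i j‖ ≤ ξ) (R Col : Finset (Fin n)) (hcard : n < R.card + Col.card)
    (hsm : ∀ i ∈ R, ∀ j ∈ Col, ‖M i j‖ ≤ ε) :
    ‖M.det‖ ≤ (n.factorial : ℝ) * (ε * ξ ^ (n - 1)) := by
  rw [Matrix.det_apply]
  refine le_trans (norm_sum_le _ _) ?_
  have key : ∀ σ : Equiv.Perm (Fin n),
      ‖Equiv.Perm.sign σ • ∏ i, M (σ i) i‖ ≤ ε * ξ ^ (n - 1) := by
    intro σ
    have hsgn : ‖Equiv.Perm.sign σ • ∏ i, M (σ i) i‖ = ‖∏ i, M (σ i) i‖ := by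
      rcases Int.units_eq_one_or (Equiv.Perm.sign σ) with h | h <;> rw [h] <;> simp
    rw [hsgn]
    obtain ⟨j₀, hj₀Col, hj₀R⟩ : ∃ j ∈ Col, σ j ∈ R := by
      by_contra hcon
      push_neg at hcon
      have h1 : Col.image σ ⊆ Rᶜ := by
        intro x hx
        obtain ⟨j, hj, rfl⟩ := Finset.mem_image.mp hx
        exact Finset.mem_compl.mpr (hcon j hj)
      have h2 := Finset.card_le_card h1
      rw [Finset.card_image_of_injective _ σ.injective, Finset.card_compl,
        Fintype.card_fin] at h2
      have hR := Finset.card_le_univ R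
      have hCol := Finset.card_le_univ Col
      simp only [Finset.card_univ, Fintype.card_fin] at hR hCol
      omega
    have hrest : ∏ i ∈ Finset.univ.erase j₀, ‖M (σ i) i‖ ≤ ξ ^ (n - 1) := by
      have := Finset.prod_le_prod (s := Finset.univ.erase j₀)
        (f := fun i => ‖M (σ i) i‖) (g := fun _ => ξ)
        (fun i _ => norm_nonneg _) (fun i _ => hb _ _)
      rwa [Finset.prod_const, Finset.card_erase_of_mem (Finset.mem_univ _),
        Finset.card_univ, Fintype.card_fin] at this
    calc ‖∏ i, M (σ i) i‖ = ∏ i, ‖M (σ i) i‖ := norm_prod _ _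
      _ = ‖M (σ j₀) j₀‖ * ∏ i ∈ Finset.univ.erase j₀, ‖M (σ i) i‖ :=
          (Finset.mul_prod_erase _ _ (Finset.mem_univ _)).symm
      _ ≤ ε * ξ ^ (n - 1) := by
          exact mul_le_mul (hsm _ hj₀R _ hj₀Col) hrest
            (Finset.prod_nonneg fun i _ => norm_nonneg _) hε
  refine le_trans (Finset.sum_le_sum fun σ _ => key σ) ?_
  rw [Finset.sum_const, Finset.card_univ, Fintype.card_perm, Fintype.card_fin, nsmul_eq_mul]

open Classical in
/-- The set of rows containing a `1`. -/
noncomputable def oneSet {n : ℕ} (M : Matrix (Fin n) (Fin n) ℂ) (r : ℕ) : Finset (Fin n) :=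
  Finset.univ.filter (fun i => ∃ h : (i : ℕ) + r < n, M i ⟨(i : ℕ) + r, h⟩ = 1)

/-- Shift by `r` (identity out of range). -/
def shift {n : ℕ} (r : ℕ) (k : Fin n) : Fin n :=
  if h : (k : ℕ) + r < n then ⟨(k : ℕ) + r, h⟩ else k

section Struct

variable {n r : ℕ} {M : Matrix (Fin n) (Fin n) ℂ}
variable (h01 : ∀ i j, M i j = 0 ∨ M i j = 1)
variable (hsupp : ∀ i j : Fin n, (j : ℕ) ≠ (i : ℕ) + r → M i j = 0)

lemma mem_oneSet {i : Fin n} :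
    i ∈ oneSet M r ↔ ∃ h : (i : ℕ) + r < n, M i ⟨(i : ℕ) + r, h⟩ = 1 := by
  classical
  simp [oneSet]

lemma shift_val {k : Fin n} (hk : k ∈ oneSet M r) : ((shift r k : Fin n) : ℕ) = (k : ℕ) + r := by
  obtain ⟨h, -⟩ := mem_oneSet.mp hk
  simp [shift, h]

lemma shift_injOn : Set.InjOn (shift r) ((oneSet M r : Finset (Fin n)) : Set (Fin n)) := by
  intro k1 h1 k2 h2 he
  have e1 := shift_val (M := M) h1
  have e2 := shift_val (M := M) h2
  have : ((shift r k1 : Fin n) : ℕ) = ((shift r k2 : Fin n) : ℕ) := by rw [he]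
  rw [e1, e2] at this
  exact Fin.ext (by omega)

include h01 hsupp in
lemma row_zero {i : Fin n} (hi : i ∉ oneSet M r) : ∀ m, M i m = 0 := by
  intro m
  rcases h01 i m with h | h
  · exact h
  · exfalso
    have hmv : (m : ℕ) = (i : ℕ) + r := by
      by_contra hc
      rw [hsupp i m hc] at h
      exact zero_ne_one h
    have hlt : (i : ℕ) + r < n := hmv ▸ m.isLt
    exact hi (mem_oneSet.mpr ⟨hlt, by rwa [show (⟨(i : ℕ) + r, hlt⟩ : Fin n) = m from
      Fin.ext hmv.symm]⟩)

include hsupp in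
lemma row_single {i : Fin n} (hi : i ∈ oneSet M r) (m : Fin n) :
    M i m = if ((m : ℕ) = (i : ℕ) + r) then 1 else 0 := by
  obtain ⟨h, h1⟩ := mem_oneSet.mp hi
  by_cases hm : (m : ℕ) = (i : ℕ) + r
  · rw [if_pos hm, show m = ⟨(i : ℕ) + r, h⟩ from Fin.ext hm]; exact h1
  · rw [if_neg hm]; exact hsupp i m hm

include h01 hsupp in
lemma col_zero {j : Fin n} (hj : j ∉ (oneSet M r).image (shift r)) : ∀ m, M m j = 0 := by
  intro m
  by_cases hm : m ∈ oneSet M r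
  · rw [row_single hsupp hm]
    rw [if_neg]
    intro hc
    exact hj (Finset.mem_image.mpr ⟨m, hm, Fin.ext (by rw [shift_val (M := M) hm, hc])⟩)
  · exact row_zero h01 hsupp hm j

include hsupp in
lemma col_single {k : Fin n} (hk : k ∈ oneSet M r) (m : Fin n) :
    M m (shift r k) = if m = k then 1 else 0 := by
  by_cases hm : m = k
  · subst hm
    rw [if_pos rfl, row_single hsupp hk, if_pos (shift_val (M := M) hk)]
  · rw [if_neg hm, hsupp]
    rw [shift_val (M := M) hk]
    intro hc
    exact hm (Fin.ext (by omega))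

include h01 hsupp in
lemma mul_right_apply (C : Matrix (Fin n) (Fin n) ℂ) (i j : Fin n) :
    (M * C) i j = if i ∈ oneSet M r then C (shift r i) j else 0 := by
  rw [Matrix.mul_apply]
  by_cases hi : i ∈ oneSet M r
  · rw [if_pos hi]
    rw [Finset.sum_eq_single (shift r i)]
    · rw [row_single hsupp hi, if_pos (shift_val (M := M) hi), one_mul]
    · intro m _ hm
      rw [row_single hsupp hi, if_neg, zero_mul]
      intro hc
      exact hm (Fin.ext (by rw [shift_val (M := M) hi, hc]))
    · intro h; exact absurd (Finset.mem_univ _) h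
  · rw [if_neg hi]
    exact Finset.sum_eq_zero fun m _ => by rw [row_zero h01 hsupp hi, zero_mul]

include hsupp in
lemma mul_left_apply_mem (C : Matrix (Fin n) (Fin n) ℂ) (i : Fin n) {k : Fin n}
    (hk : k ∈ oneSet M r) : (C * M) i (shift r k) = C i k := by
  rw [Matrix.mul_apply]
  rw [Finset.sum_eq_single k]
  · rw [col_single hsupp hk, if_pos rfl, mul_one]
  · intro m _ hm
    rw [col_single hsupp hk, if_neg hm, mul_zero]
  · intro h; exact absurd (Finset.mem_univ _) h

include h01 hsupp in
lemma mul_left_apply_zero (C : Matrix (Fin n) (Fin n) ℂ) (i : Fin n) {j : Fin n}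
    (hj : j ∉ (oneSet M r).image (shift r)) : (C * M) i j = 0 := by
  rw [Matrix.mul_apply]
  exact Finset.sum_eq_zero fun m _ => by rw [col_zero h01 hsupp hj, mul_zero]

include h01 hsupp in
lemma rank_eq_card : M.rank = (oneSet M r).card := by
  classical
  rw [Matrix.rank_eq_finrank_span_cols]
  have hspan : Submodule.span ℂ (Set.range Mᵀ) =
      Submodule.span ℂ (Set.range
        (fun k : {x // x ∈ oneSet M r} => Pi.single (M := fun _ : Fin n => ℂ) (k : Fin n) 1)) := by
    apply le_antisymm
    · rw [Submodule.span_le]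
      rintro _ ⟨j, rfl⟩
      by_cases hj : j ∈ (oneSet M r).image (shift r)
      · obtain ⟨k, hk, rfl⟩ := Finset.mem_image.mp hj
        have hcol : Mᵀ (shift r k) = Pi.single (M := fun _ : Fin n => ℂ) (k : Fin n) 1 := by
          funext m
          rw [Matrix.transpose_apply, col_single hsupp hk, Pi.single_apply]
        rw [hcol]
        exact Submodule.subset_span ⟨⟨k, hk⟩, rfl⟩
      · have hcol : Mᵀ j = 0 := funext fun m => col_zero h01 hsupp hj m
        rw [hcol]
        exact Submodule.zero_mem _
    · rw [Submodule.span_le]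
      rintro _ ⟨⟨k, hk⟩, rfl⟩
      have hcol : Mᵀ (shift r k) = (Pi.single (M := fun _ : Fin n => ℂ) k 1) := by
        funext m
        rw [Matrix.transpose_apply, col_single hsupp hk, Pi.single_apply]
      have hmem : (Pi.single (M := fun _ : Fin n => ℂ) k 1) ∈ Set.range Mᵀ := ⟨shift r k, hcol⟩
      exact Submodule.subset_span hmem
  rw [show M.col = Mᵀ from rfl, hspan]
  have hli : LinearIndependent ℂ
      (fun k : {x // x ∈ oneSet M r} => Pi.single (M := fun _ : Fin n => ℂ) (k : Fin n) 1) := by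
    have hb : LinearIndependent ℂ (fun i : Fin n => Pi.single (M := fun _ : Fin n => ℂ) i 1) := by
      have hb0 := (Pi.basisFun ℂ (Fin n)).linearIndependent
      rwa [show ⇑(Pi.basisFun ℂ (Fin n))
          = (fun i : Fin n => Pi.single (M := fun _ : Fin n => ℂ) i 1) from
        funext fun i => by simp] at hb0
    exact hb.comp _ Subtype.val_injective
  rw [finrank_span_eq_card hli, Fintype.card_coe]

end Struct

lemma arith_contra {n : ℕ} {ξ ε x y : ℝ} (hε : 0 ≤ ε) (hξ : 0 ≤ ξ)
    (hn : 1 ≤ n) (hsm : (n.factorial : ℝ) * ξ ^ n * ε < 1)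
    (hx : x ≤ (n.factorial : ℝ) * (ε * ξ ^ (n - 1)))
    (hy : y ≤ (n.factorial : ℝ) * (ξ * ε * ξ * ξ ^ (n - 1)))
    (hx0 : 0 ≤ x) (hy0 : 0 ≤ y) (h1 : 1 ≤ x * y) : False := by
  have hpow : ξ ^ (n - 1) * ξ = ξ ^ n := by
    rw [← pow_succ]
    congr 1
    omega
  have hX0 : (0 : ℝ) ≤ (n.factorial : ℝ) * ξ ^ n * ε := by positivity
  have hxy : x * y ≤ ((n.factorial : ℝ) * ξ ^ n * ε) * ((n.factorial : ℝ) * ξ ^ n * ε) := by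
    calc x * y ≤ ((n.factorial : ℝ) * (ε * ξ ^ (n - 1))) *
        ((n.factorial : ℝ) * (ξ * ε * ξ * ξ ^ (n - 1))) :=
          mul_le_mul hx hy hy0 (by positivity)
      _ = ((n.factorial : ℝ) * ξ ^ n * ε) * ((n.factorial : ℝ) * ξ ^ n * ε) := by
          rw [← hpow]; ring
  nlinarith

end Superdiag

open Superdiag in
/-- Two 0-1 matrices supported on the `r`-th superdiagonal which are
approximately intertwined by a bounded invertible matrix `C` (with
`‖AC - CB‖ < 1/(n!ξⁿ)`) have the same rank. -/
theorem rank_eq_of_approx_intertwining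
    (n r : ℕ) (hr : 1 ≤ r) (hrn : r ≤ n - 1)
    (A B : Matrix (Fin n) (Fin n) ℂ)
    (hA01 : ∀ i j, A i j = 0 ∨ A i j = 1)
    (hB01 : ∀ i j, B i j = 0 ∨ B i j = 1)
    (hAsupp : ∀ i j : Fin n, (j : ℕ) ≠ (i : ℕ) + r → A i j = 0)
    (hBsupp : ∀ i j : Fin n, (j : ℕ) ≠ (i : ℕ) + r → B i j = 0)
    (C : Matrix (Fin n) (Fin n) ℂ) (hC : IsUnit C)
    (ξ : ℝ) (hCn : opNorm C ≤ ξ) (hCin : opNorm C⁻¹ ≤ ξ)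
    (hsmall : opNorm (A * C - C * B) < 1 / (Nat.factorial n * ξ ^ n)) :
    A.rank = B.rank := by
  classical
  have hn2 : 2 ≤ n := by omega
  rw [rank_eq_card hA01 hAsupp, rank_eq_card hB01 hBsupp]
  by_contra hne
  set SA := oneSet A r with hSA
  set SB := oneSet B r with hSB
  have hCdet : IsUnit C.det := (Matrix.isUnit_iff_isUnit_det C).mp hC
  set ε := opNorm (A * C - C * B) with hεdef
  have hε0 : 0 ≤ ε := by rw [hεdef, opNorm_eq]; exact norm_nonneg _
  have hξ0 : 0 ≤ ξ := le_trans (by rw [opNorm_eq]; exact norm_nonneg _) hCn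
  have hξpos : 0 < ξ := by
    rcases lt_or_eq_of_le hξ0 with h | h
    · exact h
    · exfalso
      rw [← h] at hsmall
      rw [zero_pow (by omega), mul_zero, div_zero] at hsmall
      exact absurd hsmall (not_lt.mpr hε0)
  have hK : (0 : ℝ) < (n.factorial : ℝ) * ξ ^ n := by positivity
  have hεsm : (n.factorial : ℝ) * ξ ^ n * ε < 1 := by
    have := (lt_div_iff₀ hK).mp hsmall
    linarith [this]
  -- entrywise bounds
  have hCb : ∀ i j, ‖C i j‖ ≤ ξ := fun i j => (entry_le C i j).trans hCn
  have hCib : ∀ i j, ‖C⁻¹ i j‖ ≤ ξ := fun i j => (entry_le C⁻¹ i j).trans hCin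
  have hEb : ∀ i j, ‖(A * C - C * B) i j‖ ≤ ε := fun i j => entry_le _ i j
  -- the conjugated defect
  have hDdef : C⁻¹ * (A * C - C * B) * C⁻¹ = C⁻¹ * A - B * C⁻¹ := by
    rw [Matrix.mul_sub, Matrix.sub_mul]
    congr 1
    · rw [← Matrix.mul_assoc, Matrix.mul_assoc (C⁻¹ * A), Matrix.mul_nonsing_inv _ hCdet,
        Matrix.mul_one]
    · rw [← Matrix.mul_assoc, Matrix.nonsing_inv_mul _ hCdet, Matrix.one_mul]
  have hDnorm : opNorm (C⁻¹ * A - B * C⁻¹) ≤ ξ * ε * ξ := by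
    rw [← hDdef]
    calc opNorm (C⁻¹ * (A * C - C * B) * C⁻¹)
        ≤ opNorm (C⁻¹ * (A * C - C * B)) * opNorm C⁻¹ := opNorm_mul_le _ _
      _ ≤ (opNorm C⁻¹ * opNorm (A * C - C * B)) * opNorm C⁻¹ := by
          apply mul_le_mul_of_nonneg_right (opNorm_mul_le _ _)
          rw [opNorm_eq]; exact norm_nonneg _
      _ ≤ ξ * ε * ξ := by
          apply mul_le_mul _ hCin (by rw [opNorm_eq]; exact norm_nonneg _) (by positivity)
          exact mul_le_mul hCin (le_refl _) hε0 hξ0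
  have hDb : ∀ i j, ‖(C⁻¹ * A - B * C⁻¹) i j‖ ≤ ξ * ε * ξ :=
    fun i j => (entry_le _ i j).trans hDnorm
  -- cardinalities
  have hSAcard : SA.card ≤ n := le_trans (Finset.card_le_univ _) (by simp)
  have hSBcard : SB.card ≤ n := le_trans (Finset.card_le_univ _) (by simp)
  have hSAimg : (SA.image (shift r)).card = SA.card :=
    Finset.card_image_of_injOn (shift_injOn (M := A))
  have hSBimg : (SB.image (shift r)).card = SB.card :=
    Finset.card_image_of_injOn (shift_injOn (M := B))
  have hdet1 : (1 : ℝ) ≤ ‖C.det‖ * ‖C⁻¹.det‖ := by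
    have h := Matrix.det_nonsing_inv_mul_det C hCdet
    have h2 : ‖C⁻¹.det‖ * ‖C.det‖ = 1 := by rw [← norm_mul, h, norm_one]
    rw [mul_comm] at h2
    exact h2.ge
  rcases lt_or_gt_of_ne hne with hlt | hlt
  · -- SA.card < SB.card
    have hdetC : ‖C.det‖ ≤ (n.factorial : ℝ) * (ε * ξ ^ (n - 1)) := by
      apply det_le C hξ0 hε0 hCb SAᶜ SB
      · rw [Finset.card_compl, Fintype.card_fin]; omega
      · intro i hi k hk
        have h1 : (A * C) i (shift r k) = 0 := by
          rw [mul_right_apply hA01 hAsupp, if_neg (Finset.mem_compl.mp hi)]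
        have h2 : (C * B) i (shift r k) = C i k := mul_left_apply_mem hBsupp C i hk
        have : (A * C - C * B) i (shift r k) = -(C i k) := by
          rw [Matrix.sub_apply, h1, h2, zero_sub]
        calc ‖C i k‖ = ‖(A * C - C * B) i (shift r k)‖ := by rw [this, norm_neg]
          _ ≤ ε := hEb _ _
    have hdetCi : ‖C⁻¹.det‖ ≤ (n.factorial : ℝ) * (ξ * ε * ξ * ξ ^ (n - 1)) := by
      apply det_le C⁻¹ hξ0 (by positivity) hCib (SB.image (shift r)) (SA.image (shift r))ᶜ
      · rw [Finset.card_compl, Fintype.card_fin, hSAimg, hSBimg]; omega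
      · intro i' hi' j hj
        obtain ⟨i, hi, rfl⟩ := Finset.mem_image.mp hi'
        have h1 : (C⁻¹ * A) i j = 0 :=
          mul_left_apply_zero hA01 hAsupp C⁻¹ i (Finset.mem_compl.mp hj)
        have h2 : (B * C⁻¹) i j = C⁻¹ (shift r i) j := by
          rw [mul_right_apply hB01 hBsupp, if_pos hi]
        have : (C⁻¹ * A - B * C⁻¹) i j = -(C⁻¹ (shift r i) j) := by
          rw [Matrix.sub_apply, h1, h2, zero_sub]
        calc ‖C⁻¹ (shift r i) j‖ = ‖(C⁻¹ * A - B * C⁻¹) i j‖ := by rw [this, norm_neg]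
          _ ≤ ξ * ε * ξ := hDb _ _
    exact arith_contra hε0 hξ0 (by omega) hεsm hdetC hdetCi (norm_nonneg _) (norm_nonneg _) hdet1
  · -- SB.card < SA.card
    have hdetC : ‖C.det‖ ≤ (n.factorial : ℝ) * (ε * ξ ^ (n - 1)) := by
      apply det_le C hξ0 hε0 hCb (SA.image (shift r)) (SB.image (shift r))ᶜ
      · rw [Finset.card_compl, Fintype.card_fin, hSAimg, hSBimg]; omega
      · intro i' hi' j hj
        obtain ⟨i, hi, rfl⟩ := Finset.mem_image.mp hi'
        have h1 : (A * C) i j = C (shift r i) j := by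
          rw [mul_right_apply hA01 hAsupp, if_pos hi]
        have h2 : (C * B) i j = 0 :=
          mul_left_apply_zero hB01 hBsupp C i (Finset.mem_compl.mp hj)
        have : (A * C - C * B) i j = C (shift r i) j := by
          rw [Matrix.sub_apply, h1, h2, sub_zero]
        calc ‖C (shift r i) j‖ = ‖(A * C - C * B) i j‖ := by rw [this]
          _ ≤ ε := hEb _ _
    have hdetCi : ‖C⁻¹.det‖ ≤ (n.factorial : ℝ) * (ξ * ε * ξ * ξ ^ (n - 1)) := by
      apply det_le C⁻¹ hξ0 (by positivity) hCib SBᶜ SA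
      · rw [Finset.card_compl, Fintype.card_fin]; omega
      · intro i hi k hk
        have h1 : (C⁻¹ * A) i (shift r k) = C⁻¹ i k := mul_left_apply_mem hAsupp C⁻¹ i hk
        have h2 : (B * C⁻¹) i (shift r k) = 0 := by
          rw [mul_right_apply hB01 hBsupp, if_neg (Finset.mem_compl.mp hi)]
        have : (C⁻¹ * A - B * C⁻¹) i (shift r k) = C⁻¹ i k := by
          rw [Matrix.sub_apply, h1, h2, sub_zero]
        calc ‖C⁻¹ i k‖ = ‖(C⁻¹ * A - B * C⁻¹) i (shift r k)‖ := by rw [this]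
          _ ≤ ξ * ε * ξ := hDb _ _
    exact arith_contra hε0 hξ0 (by omega) hεsm hdetC hdetCi (norm_nonneg _) (norm_nonneg _) hdet1
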